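/- Let κ : ℝ → ℝ be continuous, bounded, and disconjugate (every Jacobi solution for κ that vanishes at two distinct points is identically zero). Let T ≠ 0 and let z_T be the unique Jacobi solution for κ with z_T(0) = 1 and z_T(T) = 0. Then z_T is unbounded on ℝ. -/

import Mathlib

open Set

/-- A Jacobi solution for `κ` on `ℝ`: a `C²` function with `z'' + κ z = 0`. -/
def IsJacobi (κ z : ℝ → ℝ) : Prop :=
  ContDiff ℝ 2 z ∧ ∀ t, deriv (deriv z) t + κ t * z t = 0

/-- `κ` is disconjugate: every Jacobi solution for `κ` that vanishes at two
distinct points is identically zero. -/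
def Disconjugate (κ : ℝ → ℝ) : Prop :=
  ∀ z : ℝ → ℝ, IsJacobi κ z →
    ∀ a b : ℝ, a ≠ b → z a = 0 → z b = 0 → ∀ t, z t = 0

open Filter intervalIntegral
open scoped Topology

lemma tendsto_integral_div_pow {r : ℝ → ℝ} {T L : ℝ} (k : ℕ) (hr : Continuous r)
    (hlim : Tendsto (fun s => r s / (s - T) ^ k) (𝓝[≠] T) (𝓝 L)) :
    Tendsto (fun t => (∫ s in T..t, r s) / (t - T) ^ (k + 1)) (𝓝[≠] T)
      (𝓝 (L / (k + 1))) := by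
  have hrT : r T = L * (0:ℝ) ^ k := by
    have h1 : Tendsto r (𝓝[≠] T) (𝓝 (r T)) :=
      (hr.continuousAt.tendsto).mono_left nhdsWithin_le_nhds
    have h2 : Tendsto (fun s => (s - T) ^ k) (𝓝[≠] T) (𝓝 ((0:ℝ) ^ k)) := by
      have h0 : Tendsto (fun s : ℝ => s - T) (𝓝 T) (𝓝 0) := by
        simpa using ((continuous_sub_right T : Continuous fun s : ℝ => s - T)).tendsto T
      exact ((h0.pow k).mono_left nhdsWithin_le_nhds)
    have h3 : Tendsto (fun s => r s / (s - T) ^ k * (s - T) ^ k) (𝓝[≠] T)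
        (𝓝 (L * (0:ℝ) ^ k)) := hlim.mul h2
    have h4 : (fun s => r s / (s - T) ^ k * (s - T) ^ k) =ᶠ[𝓝[≠] T] r := by
      refine Filter.eventuallyEq_of_mem self_mem_nhdsWithin (fun s hs => ?_)
      have hsT : s - T ≠ 0 := sub_ne_zero.2 hs
      field_simp
    exact tendsto_nhds_unique h1 (h3.congr' h4)
  rw [Metric.tendsto_nhdsWithin_nhds] at hlim ⊢
  intro ε hε
  obtain ⟨δ, hδ, H⟩ := hlim (ε / 2) (by positivity)
  refine ⟨δ, hδ, ?_⟩
  intro t htT htδ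
  have htT' : t - T ≠ 0 := sub_ne_zero.2 htT
  -- pointwise bound on the integrand
  have key : ∀ s, dist s T < δ → |r s - L * (s - T) ^ k| ≤ ε / 2 * |s - T| ^ k := by
    intro s hs
    by_cases hsT : s = T
    · subst hsT
      simp only [hrT, sub_self, abs_zero]
      positivity
    · have := H hsT hs
      have hsT' : s - T ≠ 0 := sub_ne_zero.2 hsT
      rw [Real.dist_eq] at this
      have : |r s / (s - T) ^ k - L| ≤ ε / 2 := le_of_lt this
      calc |r s - L * (s - T) ^ k| = |r s / (s - T) ^ k - L| * |s - T| ^ k := by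
            rw [← abs_pow, ← abs_mul]; congr 1; field_simp
        _ ≤ ε / 2 * |s - T| ^ k := by
            apply mul_le_mul_of_nonneg_right this (by positivity)
  have hint1 : IntervalIntegrable r MeasureTheory.volume T t := hr.intervalIntegrable _ _
  have hint2 : IntervalIntegrable (fun s => L * (s - T) ^ k) MeasureTheory.volume T t := by
    apply Continuous.intervalIntegrable; continuity
  have hpowint : (∫ s in T..t, L * (s - T) ^ k) = L * (t - T) ^ (k + 1) / (k + 1) := by
    rw [intervalIntegral.integral_const_mul]
    have := intervalIntegral.integral_comp_sub_right (fun u => u ^ k) T (a := T) (b := t)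
    rw [this]
    simp [integral_pow]
    ring
  have hbound : |(∫ s in T..t, r s) - L * (t - T) ^ (k + 1) / (k + 1)|
      ≤ ε / 2 * |t - T| ^ (k + 1) := by
    rw [← hpowint, ← intervalIntegral.integral_sub hint1 hint2]
    have := intervalIntegral.norm_integral_le_of_norm_le_const
      (C := ε / 2 * |t - T| ^ k) (f := fun s => r s - L * (s - T) ^ k) (a := T) (b := t) ?_
    · calc |∫ s in T..t, (r s - L * (s - T) ^ k)| ≤ ε / 2 * |t - T| ^ k * |t - T| := by
            simpa [Real.norm_eq_abs, abs_sub_comm t T] using this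
        _ = ε / 2 * |t - T| ^ (k + 1) := by ring
    · intro x hx
      have hx' : |x - T| ≤ |t - T| := by
        rcases le_total T t with h | h
        · rw [uIoc_of_le h] at hx
          have h1 : T < x := hx.1
          have h2 : x ≤ t := hx.2
          rw [abs_of_pos (by linarith), abs_of_pos (by linarith)]; linarith
        · rw [uIoc_of_ge h] at hx
          have h1 : t < x := hx.1
          have h2 : x ≤ T := hx.2
          rw [abs_of_nonpos (by linarith), abs_of_neg (by linarith)]; linarith
      have hxδ : dist x T < δ := by
        rw [Real.dist_eq]
        calc |x - T| ≤ |t - T| := hx'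
          _ < δ := by rwa [Real.dist_eq] at htδ
      calc ‖r x - L * (x - T) ^ k‖ = |r x - L * (x - T) ^ k| := rfl
        _ ≤ ε / 2 * |x - T| ^ k := key x hxδ
        _ ≤ ε / 2 * |t - T| ^ k := by
            apply mul_le_mul_of_nonneg_left (pow_le_pow_left₀ (abs_nonneg _) hx' k)
            positivity
  rw [Real.dist_eq]
  have habs : |(t - T) ^ (k + 1)| = |t - T| ^ (k + 1) := abs_pow _ _
  have hpos : (0:ℝ) < |t - T| ^ (k + 1) := by positivity
  calc |(∫ s in T..t, r s) / (t - T) ^ (k + 1) - L / (k + 1)|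
      = |(∫ s in T..t, r s) - L * (t - T) ^ (k + 1) / (k + 1)| / |t - T| ^ (k + 1) := by
        rw [← habs, ← abs_div]; congr 1; field_simp
    _ ≤ ε / 2 := by
        rw [div_le_iff₀ hpos]
        simpa using hbound
    _ < ε := by linarith

lemma hasDerivAt_of_deriv_tendsto {f g : ℝ → ℝ} {T d : ℝ}
    (hf : Continuous f) (hd : ∀ t, t ≠ T → HasDerivAt f (g t) t)
    (hl : Tendsto g (𝓝[≠] T) (𝓝 d)) : HasDerivAt f d T := by
  rw [hasDerivAt_iff_tendsto_slope]
  rw [Metric.tendsto_nhdsWithin_nhds] at hl ⊢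
  intro ε hε
  obtain ⟨δ, hδ, H⟩ := hl ε hε
  refine ⟨δ, hδ, ?_⟩
  intro t ht htδ
  have htT : t ≠ T := ht
  have hslope : ∃ c : ℝ, c ≠ T ∧ |c - T| < |t - T| ∧ g c = slope f T t := by
    rcases lt_or_gt_of_ne htT with h | h
    · obtain ⟨c, hc, hceq⟩ := exists_hasDerivAt_eq_slope f g h
        (hf.continuousOn) (fun x hx => hd x (ne_of_lt hx.2))
      refine ⟨c, ne_of_lt hc.2, ?_, ?_⟩
      · rw [abs_of_neg (by linarith [hc.1, hc.2] : c - T < 0),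
          abs_of_neg (by linarith : t - T < 0)]
        linarith [hc.1]
      · rw [hceq, slope_def_field]
        rw [div_eq_div_iff (sub_ne_zero.2 h.ne') (sub_ne_zero.2 htT)]
        ring
    · obtain ⟨c, hc, hceq⟩ := exists_hasDerivAt_eq_slope f g h
        (hf.continuousOn) (fun x hx => hd x (ne_of_gt hx.1))
      refine ⟨c, ne_of_gt hc.1, ?_, ?_⟩
      · rw [abs_of_pos (by linarith [hc.1] : (0:ℝ) < c - T),
          abs_of_pos (by linarith : (0:ℝ) < t - T)]
        linarith [hc.2]
      · rw [hceq, slope_def_field]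
    -- second case slope f T t = (f t - f T)/(t - T), MVT on [T, t] gives (f t - f T)/(t - T)
  obtain ⟨c, hcT, hclt, hc⟩ := hslope
  rw [← hc]
  have hcd : dist c T < δ := by
    rw [Real.dist_eq]
    calc |c - T| < |t - T| := hclt
      _ < δ := by rwa [Real.dist_eq] at htδ
  exact H hcT hcd

lemma contDiff_two_facts {z : ℝ → ℝ} (hz : ContDiff ℝ 2 z) :
    Differentiable ℝ z ∧ Differentiable ℝ (deriv z) := by
  have h2 : ContDiff ℝ (1 + 1) z := by norm_num; exact hz
  have := contDiff_succ_iff_deriv.mp h2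
  exact ⟨this.1, this.2.2.differentiable one_ne_zero⟩

lemma jacobi_zero {κ z : ℝ → ℝ} {M : ℝ} (hκbd : ∀ t, |κ t| ≤ M)
    (hz : ContDiff ℝ 2 z) (heq : ∀ t, deriv (deriv z) t + κ t * z t = 0)
    {T : ℝ} (h0 : z T = 0) (h1 : deriv z T = 0) : ∀ t, z t = 0 := by
  obtain ⟨hzd, hzd1⟩ := contDiff_two_facts hz
  set h : ℝ → ℝ := fun t => z t ^ 2 + deriv z t ^ 2 with hh
  set h' : ℝ → ℝ := fun t => 2 * z t * deriv z t + 2 * deriv z t * deriv (deriv z) t with hh'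
  have hM : 0 ≤ M := le_trans (abs_nonneg _) (hκbd 0)
  set K : ℝ := 1 + M with hK
  have hd : ∀ t, HasDerivAt h (h' t) t := by
    intro t
    have h1' : HasDerivAt (fun t => z t ^ 2) (2 * z t * deriv z t) t := by
      simpa using ((hzd t).hasDerivAt.fun_pow 2)
    have h2' : HasDerivAt (fun t => deriv z t ^ 2) (2 * deriv z t * deriv (deriv z) t) t := by
      simpa using ((hzd1 t).hasDerivAt.fun_pow 2)
    exact h1'.add h2'
  have hnn : ∀ t, 0 ≤ h t := fun t => by positivity
  have hbound : ∀ t, ‖h' t‖ ≤ K * ‖h t‖ + 0 := by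
    intro t
    have he : deriv (deriv z) t = -(κ t * z t) := by linarith [heq t]
    rw [Real.norm_eq_abs, Real.norm_eq_abs, abs_of_nonneg (hnn t), add_zero]
    have e1 : h' t = 2 * z t * deriv z t * (1 - κ t) := by rw [hh']; simp only []; rw [he]; ring
    rw [e1]
    have e2 : |2 * z t * deriv z t * (1 - κ t)| = 2 * |z t| * |deriv z t| * |1 - κ t| := by
      rw [abs_mul, abs_mul, abs_mul]; simp [abs_of_nonneg]
    rw [e2]
    have e3 : |1 - κ t| ≤ K := by
      rw [hK]
      calc |1 - κ t| ≤ |1| + |κ t| := abs_sub _ _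
        _ ≤ 1 + M := by simp [hκbd t]
    have e4 : 2 * |z t| * |deriv z t| ≤ h t := by
      have := two_mul_le_add_sq (|z t|) (|deriv z t|)
      simp only [sq_abs] at this
      show 2 * |z t| * |deriv z t| ≤ z t ^ 2 + deriv z t ^ 2
      nlinarith
    calc 2 * |z t| * |deriv z t| * |1 - κ t| ≤ h t * K := by
          apply mul_le_mul e4 e3 (abs_nonneg _) (hnn t)
      _ = K * h t := by ring
  have key : ∀ b, T ≤ b → h b = 0 := by
    intro b hb
    have := norm_le_gronwallBound_of_norm_deriv_right_le
      (f := h) (f' := h') (δ := 0) (K := K) (ε := 0) (a := T) (b := b)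
      (fun x _ => (hd x).continuousAt.continuousWithinAt)
      (fun x _ => (hd x).hasDerivWithinAt)
      (by rw [Real.norm_eq_abs, abs_of_nonneg (hnn T)]; simp [hh, h0, h1])
      (fun x _ => hbound x) b ⟨hb, le_rfl⟩
    rw [gronwallBound_ε0_δ0] at this
    rw [Real.norm_eq_abs, abs_of_nonneg (hnn b)] at this
    linarith [hnn b]
  have key2 : ∀ b, b ≤ T → h b = 0 := by
    intro b hb
    set g : ℝ → ℝ := fun t => h (2 * T - t) with hg
    have hgd : ∀ t, HasDerivAt g (-h' (2 * T - t)) t := by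
      intro t
      have inner : HasDerivAt (fun t : ℝ => 2 * T - t) (-1) t := by
        simpa using (hasDerivAt_id t).const_sub (2 * T)
      have := (hd (2 * T - t)).comp t inner
      exact this.congr_deriv (by ring)
    have := norm_le_gronwallBound_of_norm_deriv_right_le
      (f := g) (f' := fun t => -h' (2 * T - t)) (δ := 0) (K := K) (ε := 0)
      (a := T) (b := 2 * T - b)
      (fun x _ => (hgd x).continuousAt.continuousWithinAt)
      (fun x _ => (hgd x).hasDerivWithinAt)
      (by simp only [hg]; rw [show 2 * T - T = T by ring, Real.norm_eq_abs,
            abs_of_nonneg (hnn T)]; simp [hh, h0, h1])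
      (fun x _ => by rw [norm_neg]; exact hbound (2 * T - x)) (2 * T - b)
      ⟨by linarith, le_rfl⟩
    rw [gronwallBound_ε0_δ0] at this
    have e : g (2 * T - b) = h b := by rw [hg]; congr 1; ring
    rw [Real.norm_eq_abs, e, abs_of_nonneg (hnn b)] at this
    linarith [hnn b]
  intro t
  have ht : h t = 0 := by
    rcases le_total T t with hc | hc
    · exact key t hc
    · exact key2 t hc
  have ht' : z t ^ 2 + deriv z t ^ 2 = 0 := ht
  have hz2 : z t ^ 2 = 0 := by nlinarith [sq_nonneg (deriv z t), sq_nonneg (z t)]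
  exact pow_eq_zero_iff (two_ne_zero) |>.mp hz2

lemma exists_second_solution {κ z : ℝ → ℝ} (hκ : Continuous κ)
    (hz : ContDiff ℝ 2 z) (heq : ∀ t, deriv (deriv z) t + κ t * z t = 0)
    {T : ℝ} (hzT : z T = 0) (ha : deriv z T ≠ 0) (hne : ∀ t, t ≠ T → z t ≠ 0) :
    ∃ y I : ℝ → ℝ, (ContDiff ℝ 2 y ∧ ∀ t, deriv (deriv y) t + κ t * y t = 0) ∧
      y T = -(1 / deriv z T) ∧ (∀ t, t ≠ T → y t = z t * I t) ∧
      (∀ t, t ≠ T → HasDerivAt I (1 / z t ^ 2) t) := by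
  obtain ⟨hzd, hzd1⟩ := contDiff_two_facts hz
  set a : ℝ := deriv z T with haa
  have hzc : Continuous z := hzd.continuous
  have hz'c : Continuous (deriv z) := hzd1.continuous
  have hz'' : ∀ t, deriv (deriv z) t = -(κ t * z t) := fun t => by linarith [heq t]
  have hz''c : Continuous (deriv (deriv z)) := by
    have : deriv (deriv z) = fun t => -(κ t * z t) := funext hz''
    rw [this]; exact (hκ.mul hzc).neg
  -- basic limit: z u / (u - T) → a
  have hα : Tendsto (fun u => z u / (u - T)) (𝓝[≠] T) (𝓝 a) := by
    have := hasDerivAt_iff_tendsto_slope.mp (hzd T).hasDerivAt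
    simpa [slope_fun_def, hzT, div_eq_inv_mul] using this
  -- (z' u - a)/(u-T)^2 → -(κ T * a)/2
  have hβ : Tendsto (fun u => (deriv z u - a) / (u - T) ^ 2) (𝓝[≠] T)
      (𝓝 (-(κ T * a) / 2)) := by
    have hratio : Tendsto (fun s => deriv (deriv z) s / (s - T) ^ 1) (𝓝[≠] T)
        (𝓝 (-(κ T * a))) := by
      have hbase : Tendsto (fun s => -κ s * (z s / (s - T))) (𝓝[≠] T)
          (𝓝 (-κ T * a)) :=
        ((hκ.neg.continuousAt (x := T)).tendsto.mono_left nhdsWithin_le_nhds).mul hα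
      have : ∀ s, s ≠ T → deriv (deriv z) s / (s - T) ^ 1 = -κ s * (z s / (s - T)) := by
        intro s hs
        rw [pow_one, hz'' s]
        field_simp
      have hval : (-κ T * a) = -(κ T * a) := by ring
      rw [hval] at hbase
      exact Tendsto.congr'
        (Filter.eventuallyEq_of_mem self_mem_nhdsWithin (fun s hs => (this s hs).symm)) hbase
    have base := tendsto_integral_div_pow 1 hz''c hratio
    norm_num at base
    have ftc : ∀ u, (∫ s in T..u, deriv (deriv z) s) = deriv z u - a := by
      intro u
      rw [intervalIntegral.integral_eq_sub_of_hasDerivAt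
        (fun x _ => (hzd1 x).hasDerivAt) (hz''c.intervalIntegrable _ _)]
    exact base.congr (fun u => by rw [ftc u])
  -- (z u - a (u-T))/(u-T)^3 → -(κ T * a)/6
  have hγ : Tendsto (fun u => (z u - a * (u - T)) / (u - T) ^ 3) (𝓝[≠] T)
      (𝓝 (-(κ T * a) / 6)) := by
    have hr : Continuous (fun s => deriv z s - a) := hz'c.sub continuous_const
    have base := tendsto_integral_div_pow 2 hr (by simpa using hβ)
    norm_num at base
    have ftc : ∀ u, (∫ s in T..u, (deriv z s - a)) = z u - a * (u - T) := by
      intro u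
      rw [intervalIntegral.integral_sub (hz'c.intervalIntegrable _ _)
          intervalIntegrable_const,
        intervalIntegral.integral_eq_sub_of_hasDerivAt (fun x _ => (hzd x).hasDerivAt)
          (hz'c.intervalIntegrable _ _),
        intervalIntegral.integral_const, hzT, smul_eq_mul]
      ring
    rw [show -(κ T * a) / 6 = -(κ T * a) / 2 / 3 by ring]
    exact base.congr (fun u => by rw [ftc u])
  -- the corrected integrand
  set g : ℝ → ℝ := fun u => if u = T then κ T / (3 * a ^ 2)
    else 1 / z u ^ 2 - 1 / (a ^ 2 * (u - T) ^ 2) with hg_def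
  have ha2 : a ^ 2 ≠ 0 := pow_ne_zero 2 ha
  have hgT : Tendsto g (𝓝[≠] T) (𝓝 (κ T / (3 * a ^ 2))) := by
    have hQ : Tendsto (fun u => z u / (u - T) + a) (𝓝[≠] T) (𝓝 (a + a)) :=
      hα.add tendsto_const_nhds
    have hR : Tendsto (fun u => (z u / (u - T) * (z u / (u - T)))⁻¹) (𝓝[≠] T)
        (𝓝 ((a * a)⁻¹)) := (hα.mul hα).inv₀ (mul_ne_zero ha ha)
    have hprod : Tendsto (fun u => -((z u - a * (u - T)) / (u - T) ^ 3 *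
        (z u / (u - T) + a) * (z u / (u - T) * (z u / (u - T)))⁻¹ / a ^ 2)) (𝓝[≠] T)
        (𝓝 (-(-(κ T * a) / 6 * (a + a) * (a * a)⁻¹ / a ^ 2))) :=
      (((hγ.mul hQ).mul hR).div_const _).neg
    have hval : -(-(κ T * a) / 6 * (a + a) * (a * a)⁻¹ / a ^ 2) = κ T / (3 * a ^ 2) := by
      field_simp
      ring
    rw [hval] at hprod
    refine Tendsto.congr' ?_ hprod
    refine Filter.eventuallyEq_of_mem self_mem_nhdsWithin (fun u hu => ?_)
    have huT : (u : ℝ) - T ≠ 0 := sub_ne_zero.2 hu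
    have hzu : z u ≠ 0 := hne u hu
    rw [hg_def]
    simp only [if_neg (show u ≠ T from hu)]
    field_simp
    ring
  have hgTval : g T = κ T / (3 * a ^ 2) := by rw [hg_def]; simp
  have hgc : Continuous g := by
    rw [continuous_iff_continuousAt]
    intro u
    by_cases hu : u = T
    · subst hu
      rw [ContinuousAt, ← nhdsNE_sup_pure u, tendsto_sup]
      exact ⟨by rw [hgTval]; exact hgT, tendsto_pure_nhds g u⟩
    · have hev : g =ᶠ[𝓝 u] fun v => 1 / z v ^ 2 - 1 / (a ^ 2 * (v - T) ^ 2) := by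
        refine Filter.eventually_of_mem (isOpen_compl_singleton.mem_nhds hu) (fun v hv => ?_)
        rw [hg_def]; simp only [if_neg (show v ≠ T from hv)]
      have hcF : ContinuousAt (fun v => 1 / z v ^ 2 - 1 / (a ^ 2 * (v - T) ^ 2)) u := by
        apply ContinuousAt.sub
        · exact (continuousAt_const).div ((hzc.continuousAt).pow 2)
            (pow_ne_zero 2 (hne u hu))
        · exact (continuousAt_const).div
            ((continuousAt_const).mul (((continuousAt_id).sub continuousAt_const).pow 2))
            (mul_ne_zero ha2 (pow_ne_zero 2 (sub_ne_zero.2 hu)))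
      exact hcF.congr hev.symm
  -- G and I
  set G : ℝ → ℝ := fun t => ∫ s in T..t, g s with hG_def
  have hG : ∀ t, HasDerivAt G (g t) t := fun t => (hgc.integral_hasStrictDerivAt T t).hasDerivAt
  have hGc : Continuous G := by
    have : Differentiable ℝ G := fun t => (hG t).differentiableAt
    exact this.continuous
  have hGT : G T = 0 := intervalIntegral.integral_same
  set I : ℝ → ℝ := fun t => G t - 1 / (a ^ 2 * (t - T)) with hI_def
  have hI' : ∀ t, t ≠ T → HasDerivAt I (1 / z t ^ 2) t := by
    intro t ht
    have htT : t - T ≠ 0 := sub_ne_zero.2 ht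
    have inner : HasDerivAt (fun t => a ^ 2 * (t - T)) (a ^ 2) t := by
      simpa using ((hasDerivAt_id t).sub_const T).const_mul (a ^ 2)
    have hinv : HasDerivAt (fun t => 1 / (a ^ 2 * (t - T)))
        (-(a ^ 2) / (a ^ 2 * (t - T)) ^ 2) t := by
      simpa [one_div] using inner.fun_inv (mul_ne_zero ha2 htT)
    have := (hG t).fun_sub hinv
    refine this.congr_deriv ?_
    rw [hg_def]
    simp only [if_neg ht]
    field_simp
    ring
  -- the second solution y
  set y : ℝ → ℝ := fun t => if t = T then -(1 / a) else z t * I t with hy_def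
  have hyI : ∀ t, t ≠ T → y t = z t * I t := fun t ht => by
    simp only [hy_def, if_neg ht]
  have hyTval : y T = -(1 / a) := by simp only [hy_def, if_pos rfl]
  have hy_tendsto : Tendsto y (𝓝[≠] T) (𝓝 (-(1 / a))) := by
    have h1 := (((hzc.continuousAt (x := T)).tendsto.mono_left nhdsWithin_le_nhds).mul
      ((hGc.continuousAt (x := T)).tendsto.mono_left nhdsWithin_le_nhds)).sub
      (hα.div_const (a ^ 2))
    rw [hzT, hGT] at h1
    have hval : (0 : ℝ) * 0 - a / a ^ 2 = -(1 / a) := by field_simp; ring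
    rw [hval] at h1
    refine Tendsto.congr' ?_ h1
    refine Filter.eventuallyEq_of_mem self_mem_nhdsWithin (fun u hu => ?_)
    have huT : (u : ℝ) - T ≠ 0 := sub_ne_zero.2 hu
    rw [hyI u hu]
    simp only [hI_def]
    field_simp
  have hyc : Continuous y := by
    rw [continuous_iff_continuousAt]
    intro u
    by_cases hu : u = T
    · subst hu
      rw [ContinuousAt, ← nhdsNE_sup_pure u, tendsto_sup]
      exact ⟨by rw [hyTval]; exact hy_tendsto, tendsto_pure_nhds y u⟩
    · have hev : y =ᶠ[𝓝 u] fun v => z v * I v :=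
        Filter.eventually_of_mem (isOpen_compl_singleton.mem_nhds hu) (fun v hv => hyI v hv)
      have : ContinuousAt (fun v => z v * I v) u :=
        (hzc.continuousAt).mul (hI' u hu).differentiableAt.continuousAt
      exact this.congr hev.symm
  -- the derivative candidate of y
  set yd : ℝ → ℝ := fun t => if t = T then 0 else deriv z t * I t + 1 / z t with hyd_def
  have hydval : ∀ t, t ≠ T → yd t = deriv z t * I t + 1 / z t := fun t ht => by
    simp only [hyd_def, if_neg ht]
  have hyd : ∀ t, t ≠ T → HasDerivAt y (yd t) t := by
    intro t ht
    have hev : y =ᶠ[𝓝 t] fun v => z v * I v :=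
      Filter.eventually_of_mem (isOpen_compl_singleton.mem_nhds ht) (fun v hv => hyI v hv)
    have h1 : HasDerivAt (fun v => z v * I v)
        (deriv z t * I t + z t * (1 / z t ^ 2)) t :=
      (hzd t).hasDerivAt.mul (hI' t ht)
    have h2 : HasDerivAt y (deriv z t * I t + z t * (1 / z t ^ 2)) t :=
      h1.congr_of_eventuallyEq hev
    have hval : deriv z t * I t + z t * (1 / z t ^ 2) = yd t := by
      rw [hydval t ht]
      have hzt := hne t ht
      field_simp
    rwa [hval] at h2
  -- the quantity N and its asymptotics
  set N : ℝ → ℝ := fun s => deriv z s ^ 2 - a ^ 2 - κ s * z s ^ 2 with hN_def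
  have hNc : Continuous N := ((hz'c.pow 2).sub continuous_const).sub (hκ.mul (hzc.pow 2))
  have ftcN : ∀ u, (∫ s in T..u, N s) = z u * deriv z u - a ^ 2 * (u - T) := by
    intro u
    have hderiv : ∀ x ∈ uIcc T u,
        HasDerivAt (fun s => z s * deriv z s - a ^ 2 * (s - T)) (N x) x := by
      intro x _
      have h1 : HasDerivAt (fun s => z s * deriv z s)
          (deriv z x * deriv z x + z x * deriv (deriv z) x) x :=
        (hzd x).hasDerivAt.mul (hzd1 x).hasDerivAt
      have h2 : HasDerivAt (fun s : ℝ => a ^ 2 * (s - T)) (a ^ 2) x := by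
        simpa using ((hasDerivAt_id x).sub_const T).const_mul (a ^ 2)
      have h3 := h1.fun_sub h2
      refine h3.congr_deriv ?_
      simp only [hN_def]
      rw [hz'' x]
      ring
    rw [intervalIntegral.integral_eq_sub_of_hasDerivAt hderiv (hNc.intervalIntegrable _ _),
      hzT]
    ring
  have hNratio : Tendsto (fun s => N s / (s - T) ^ 2) (𝓝[≠] T)
      (𝓝 (-(2 * (κ T * a ^ 2)))) := by
    have h1 := hβ.mul (((hz'c.continuousAt (x := T)).tendsto.mono_left
      nhdsWithin_le_nhds).add (tendsto_const_nhds (x := a)))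
    have h2 := ((hκ.continuousAt (x := T)).tendsto.mono_left nhdsWithin_le_nhds).mul
      (hα.pow 2)
    have h3 := h1.sub h2
    rw [← haa] at h3
    have hval : -(κ T * a) / 2 * (a + a) - κ T * a ^ 2 = -(2 * (κ T * a ^ 2)) := by ring
    rw [hval] at h3
    refine Tendsto.congr' ?_ h3
    refine Filter.eventuallyEq_of_mem self_mem_nhdsWithin (fun s hs => ?_)
    have hsT : (s : ℝ) - T ≠ 0 := sub_ne_zero.2 hs
    simp only [hN_def]
    field_simp
    ring
  have hydT_lim : Tendsto yd (𝓝[≠] T) (𝓝 0) := by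
    have hbase := tendsto_integral_div_pow 2 hNc hNratio
    norm_num at hbase
    have hzA : Tendsto (fun u => ((u - T) * (z u / (u - T))⁻¹)) (𝓝[≠] T)
        (𝓝 (0 * a⁻¹)) := by
      apply Tendsto.mul ?_ (hα.inv₀ ha)
      have h0 : Tendsto (fun u : ℝ => u - T) (𝓝 T) (𝓝 0) := by
        simpa using ((continuous_sub_right T :
          Continuous fun u : ℝ => u - T)).tendsto T
      exact h0.mono_left nhdsWithin_le_nhds
    have h1 := (((hz'c.continuousAt (x := T)).tendsto.mono_left nhdsWithin_le_nhds).mul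
      ((hGc.continuousAt (x := T)).tendsto.mono_left nhdsWithin_le_nhds)).add
      ((hbase.neg.mul hzA).div_const (a ^ 2))
    rw [hGT] at h1
    have h2 : Tendsto (fun u => deriv z u * G u +
        -((∫ s in T..u, N s) / (u - T) ^ 3) * ((u - T) * (z u / (u - T))⁻¹) / a ^ 2)
        (𝓝[≠] T) (𝓝 0) := by
      convert h1 using 2
      ring
    refine Tendsto.congr' ?_ h2
    refine Filter.eventuallyEq_of_mem self_mem_nhdsWithin (fun u hu => ?_)
    have huT : (u : ℝ) - T ≠ 0 := sub_ne_zero.2 hu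
    have hzu : z u ≠ 0 := hne u hu
    rw [hydval u hu, ftcN u, inv_div]
    simp only [hI_def]
    field_simp
    ring
  have hyT : HasDerivAt y 0 T := hasDerivAt_of_deriv_tendsto hyc hyd hydT_lim
  have hydiff : Differentiable ℝ y := by
    intro t
    by_cases ht : t = T
    · subst ht; exact hyT.differentiableAt
    · exact (hyd t ht).differentiableAt
  have hderiv_y : deriv y = yd := by
    funext t
    by_cases ht : t = T
    · subst ht
      rw [hyT.deriv]
      simp only [hyd_def, if_pos rfl]
    · exact (hyd t ht).deriv
  have hydc : Continuous yd := by
    rw [continuous_iff_continuousAt]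
    intro u
    by_cases hu : u = T
    · subst hu
      rw [ContinuousAt, ← nhdsNE_sup_pure u, tendsto_sup]
      refine ⟨?_, tendsto_pure_nhds yd u⟩
      rw [show yd u = 0 from by simp only [hyd_def, if_pos rfl]]
      exact hydT_lim
    · have hev : yd =ᶠ[𝓝 u] fun v => deriv z v * I v + 1 / z v :=
        Filter.eventually_of_mem (isOpen_compl_singleton.mem_nhds hu)
          (fun v hv => hydval v hv)
      have : ContinuousAt (fun v => deriv z v * I v + 1 / z v) u := by
        apply ContinuousAt.add
        · exact (hz'c.continuousAt).mul (hI' u hu).differentiableAt.continuousAt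
        · exact continuousAt_const.div hzc.continuousAt (hne u hu)
      exact this.congr hev.symm
  have hyd2 : ∀ t, t ≠ T → HasDerivAt yd (-(κ t * y t)) t := by
    intro t ht
    have hev : yd =ᶠ[𝓝 t] fun v => deriv z v * I v + 1 / z v :=
      Filter.eventually_of_mem (isOpen_compl_singleton.mem_nhds ht)
        (fun v hv => hydval v hv)
    have h1 : HasDerivAt (fun v => deriv z v * I v)
        (deriv (deriv z) t * I t + deriv z t * (1 / z t ^ 2)) t :=
      (hzd1 t).hasDerivAt.mul (hI' t ht)
    have h2 : HasDerivAt (fun v => 1 / z v) (-(deriv z t) / z t ^ 2) t := by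
      simpa [one_div] using ((hzd t).hasDerivAt.fun_inv (hne t ht))
    have h3 := (h1.add h2).congr_of_eventuallyEq hev
    have hval : deriv (deriv z) t * I t + deriv z t * (1 / z t ^ 2) +
        -(deriv z t) / z t ^ 2 = -(κ t * y t) := by
      rw [hz'' t, hyI t ht]
      have hzt := hne t ht
      field_simp
      ring
    rwa [hval] at h3
  have hydT2 : HasDerivAt yd (-(κ T * y T)) T := by
    apply hasDerivAt_of_deriv_tendsto hydc hyd2
    exact ((hκ.mul hyc).neg.continuousAt (x := T)).tendsto.mono_left nhdsWithin_le_nhds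
  have hyd2' : ∀ t, HasDerivAt yd (-(κ t * y t)) t := by
    intro t
    by_cases ht : t = T
    · subst ht; exact hydT2
    · exact hyd2 t ht
  have heqy : ∀ t, deriv (deriv y) t + κ t * y t = 0 := by
    intro t
    rw [hderiv_y, (hyd2' t).deriv]
    ring
  have hcdy : ContDiff ℝ 2 y := by
    have hyd_diff : Differentiable ℝ yd := fun t => (hyd2' t).differentiableAt
    have hderiv_yd : deriv yd = fun t => -(κ t * y t) := funext fun t => (hyd2' t).deriv
    have c1 : ContDiff ℝ 1 (deriv y) := by
      rw [hderiv_y, contDiff_one_iff_deriv]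
      exact ⟨hyd_diff, by rw [hderiv_yd]; exact (hκ.mul hyc).neg⟩
    have c2 : ContDiff ℝ (1 + 1) y := by
      rw [contDiff_succ_iff_deriv]
      exact ⟨hydiff, by simp, c1⟩
    norm_num at c2
    exact c2
  exact ⟨y, I, ⟨hcdy, heqy⟩, hyTval, hyI, hI'⟩


/-- If `κ` is continuous, bounded and disconjugate, `T ≠ 0`, and `z` is the
(unique) Jacobi solution with `z(0) = 1` and `z(T) = 0`, then `z` is unbounded. -/
theorem jacobi_solution_unbounded (κ : ℝ → ℝ) (hκ : Continuous κ)
    (hbd : ∃ C : ℝ, ∀ t, |κ t| ≤ C) (hdis : Disconjugate κ)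
    (T : ℝ) (hT : T ≠ 0) (z : ℝ → ℝ) (hz : IsJacobi κ z)
    (hz0 : z 0 = 1) (hzT : z T = 0) :
    ¬ ∃ C : ℝ, ∀ t, |z t| ≤ C := by
  rintro ⟨C, hC⟩
  obtain ⟨M, hM⟩ := hbd
  obtain ⟨hzcd, hzeq⟩ := hz
  obtain ⟨hzd, hzd1⟩ := contDiff_two_facts hzcd
  have hzc : Continuous z := hzd.continuous
  set a : ℝ := deriv z T with haa
  have hane : a ≠ 0 := by
    intro h
    have h0 := jacobi_zero hM hzcd hzeq hzT h 0
    rw [hz0] at h0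
    exact one_ne_zero h0
  have hne : ∀ t, t ≠ T → z t ≠ 0 := by
    intro t ht hzt
    have h0 := hdis z ⟨hzcd, hzeq⟩ t T ht hzt hzT 0
    rw [hz0] at h0
    exact one_ne_zero h0
  have hC1 : (1 : ℝ) ≤ C := by
    have := hC 0
    rwa [hz0, abs_one] at this
  have hCpos : (0 : ℝ) < C := by linarith
  have hC2pos : (0 : ℝ) < C ^ 2 := by positivity
  have hposz : ∀ t, ((t < T ∧ 0 < T) ∨ (T < t ∧ T < 0)) → 0 < z t := by
    intro t htc
    have htT : t ≠ T := by
      rcases htc with ⟨h1, _⟩ | ⟨h1, _⟩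
      exacts [ne_of_lt h1, ne_of_gt h1]
    rcases lt_trichotomy (z t) 0 with hlt | heq0 | hgt
    · exfalso
      have hmem : (0 : ℝ) ∈ uIcc (z t) (z 0) := by
        rw [hz0, mem_uIcc]
        left; exact ⟨le_of_lt hlt, zero_le_one⟩
      obtain ⟨c, hc, hc0⟩ := intermediate_value_uIcc
        (hzc.continuousOn (s := uIcc t 0)) hmem
      have hcT : c = T := by
        by_contra h
        exact hne c h hc0
      rcases htc with ⟨h1, h2⟩ | ⟨h1, h2⟩
      · have hcm : c ≤ max t 0 := hc.2
        have hcc : c < T := lt_of_le_of_lt hcm (max_lt h1 h2)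
        rw [hcT] at hcc; exact lt_irrefl _ hcc
      · have hcm : min t 0 ≤ c := hc.1
        have hcc : T < c := lt_of_lt_of_le (lt_min h1 h2) hcm
        rw [hcT] at hcc; exact lt_irrefl _ hcc
    · exact absurd heq0 (hne t htT)
    · exact hgt
  have hα : Tendsto (fun u => z u / (u - T)) (𝓝[≠] T) (𝓝 a) := by
    have := hasDerivAt_iff_tendsto_slope.mp (hzd T).hasDerivAt
    simpa [slope_fun_def, hzT, div_eq_inv_mul] using this
  obtain ⟨y, I, ⟨hycd, hyeq⟩, hyT, hyI, hI'⟩ :=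
    exists_second_solution hκ hzcd hzeq hzT hane hne
  obtain ⟨hyd, hyd1⟩ := contDiff_two_facts hycd
  have hyc : Continuous y := hyd.continuous
  -- the final contradiction via disconjugacy
  have final : ∀ s r : ℝ, r ≠ s → s ≠ T → (y r - I s * z r = 0) → False := by
    intro s r hrs hsT hr
    set w : ℝ → ℝ := fun t => y t - I s * z t with hw_def
    have hwJ : IsJacobi κ w := by
      constructor
      · exact hycd.sub (contDiff_const.mul hzcd)
      · intro t
        have hw1 : ∀ u, HasDerivAt w (deriv y u - I s * deriv z u) u := fun u =>
          (hyd u).hasDerivAt.sub ((hzd u).hasDerivAt.const_mul (I s))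
        have hderivw : deriv w = fun u => deriv y u - I s * deriv z u :=
          funext fun u => (hw1 u).deriv
        have hw2 : HasDerivAt (fun u => deriv y u - I s * deriv z u)
            (deriv (deriv y) t - I s * deriv (deriv z) t) t :=
          (hyd1 t).hasDerivAt.sub ((hzd1 t).hasDerivAt.const_mul (I s))
        rw [hderivw, hw2.deriv]
        have e1 := hyeq t
        have e2 := hzeq t
        simp only [hw_def]
        linear_combination e1 - I s * e2
    have hws : w s = 0 := by
      simp only [hw_def]
      rw [hyI s hsT]
      ring
    have hall := hdis w hwJ r s hrs hr hws T
    simp only [hw_def] at hall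
    rw [hyT, hzT, mul_zero, sub_zero] at hall
    have : (1 : ℝ) / a = 0 := by linarith
    exact one_div_ne_zero hane this
  rcases hT.lt_or_gt with hT0 | hT0
  · -- T < 0 : use the far left side
    have hapos : 0 < a := by
      have hev : ∀ᶠ u in 𝓝[>] T, 0 ≤ z u / (u - T) :=
        Filter.eventually_of_mem self_mem_nhdsWithin (fun u hu =>
          le_of_lt (div_pos (hposz u (Or.inr ⟨hu, hT0⟩)) (sub_pos.mpr hu)))
      have hle : 0 ≤ a :=
        ge_of_tendsto (hα.mono_left (nhdsWithin_mono T
          (by intro x hx; simpa using ne_of_gt hx))) hev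
      exact lt_of_le_of_ne hle (Ne.symm hane)
    set s₀ : ℝ := T - 1 with hs₀_def
    have hs₀ne : ∀ t, t ∈ Iic s₀ → t ≠ T := fun t ht => by
      have : t ≤ T - 1 := ht
      intro h; rw [h] at this; linarith
    have hmono : MonotoneOn (fun t => I t - t / C ^ 2) (Iic s₀) := by
      apply monotoneOn_of_deriv_nonneg (convex_Iic s₀)
      · intro t ht
        exact ((hI' t (hs₀ne t ht)).sub
          ((hasDerivAt_id t).div_const (C ^ 2))).differentiableAt.continuousAt.continuousWithinAt
      · intro t ht
        rw [interior_Iic] at ht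
        exact ((hI' t (hs₀ne t (mem_Iic.mpr (le_of_lt ht)))).sub
          ((hasDerivAt_id t).div_const (C ^ 2))).differentiableAt.differentiableWithinAt
      · intro t ht
        rw [interior_Iic] at ht
        have hid : HasDerivAt (fun x : ℝ => x / C ^ 2) (1 / C ^ 2) t := by
          simpa using (hasDerivAt_id t).div_const (C ^ 2)
        have hd := (hI' t (hs₀ne t (mem_Iic.mpr (le_of_lt ht)))).fun_sub hid
        rw [hd.deriv]
        have hz2 : z t ^ 2 ≤ C ^ 2 := by
          have h1 := hC t
          nlinarith [abs_nonneg (z t), sq_abs (z t)]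
        have hz2pos : 0 < z t ^ 2 := by have h := hne t (hs₀ne t (mem_Iic.mpr (le_of_lt ht))); positivity
        have h2 := one_div_le_one_div_of_le hz2pos hz2
        linarith
    set s : ℝ := s₀ - C ^ 2 * (|y 0 - I s₀| + 1) with hs_def
    have hdiff : s₀ - s = C ^ 2 * (|y 0 - I s₀| + 1) := by rw [hs_def]; ring
    have hss₀ : s ≤ s₀ := by
      nlinarith [abs_nonneg (y 0 - I s₀), hC2pos]
    have hsT : s < T := by
      have : s₀ < T := by rw [hs₀_def]; linarith
      linarith
    have hIs : I s < y 0 := by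
      have hm := hmono (mem_Iic.mpr hss₀) (mem_Iic.mpr le_rfl) hss₀
      have hdd : (s₀ - s) / C ^ 2 = |y 0 - I s₀| + 1 := by
        rw [hdiff]; field_simp
      have h1 : I s ≤ I s₀ - (s₀ - s) / C ^ 2 := by
        have expand : s₀ / C ^ 2 - s / C ^ 2 = (s₀ - s) / C ^ 2 := by ring
        linarith [hm, expand]
      have h2 : I s₀ - y 0 ≤ |y 0 - I s₀| := by
        rw [abs_sub_comm]; exact le_abs_self _
      rw [hdd] at h1
      linarith
    have hw0 : 0 < y 0 - I s * z 0 := by rw [hz0]; linarith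
    have hwT : y T - I s * z T < 0 := by
      rw [hyT, hzT, mul_zero, sub_zero]
      have : 0 < 1 / a := one_div_pos.mpr hapos
      linarith
    have hwc : Continuous fun t => y t - I s * z t := hyc.sub (continuous_const.mul hzc)
    have hmem : (0 : ℝ) ∈ Icc ((fun t => y t - I s * z t) T) ((fun t => y t - I s * z t) 0) :=
      ⟨le_of_lt hwT, le_of_lt hw0⟩
    obtain ⟨r, hrIcc, hr0⟩ := intermediate_value_Icc (le_of_lt hT0) hwc.continuousOn hmem
    refine final s r ?_ (ne_of_lt hsT) hr0
    have : s < r := lt_of_lt_of_le hsT hrIcc.1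
    exact (ne_of_lt this).symm
  · -- 0 < T : use the far right side
    have haneg : a < 0 := by
      have hev : ∀ᶠ u in 𝓝[<] T, z u / (u - T) ≤ 0 :=
        Filter.eventually_of_mem self_mem_nhdsWithin (fun u hu =>
          le_of_lt (div_neg_of_pos_of_neg (hposz u (Or.inl ⟨hu, hT0⟩)) (sub_neg.mpr hu)))
      have hle : a ≤ 0 :=
        le_of_tendsto (hα.mono_left (nhdsWithin_mono T
          (by intro x hx; simpa using ne_of_lt hx))) hev
      exact lt_of_le_of_ne hle hane
    set s₀ : ℝ := T + 1 with hs₀_def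
    have hs₀ne : ∀ t, t ∈ Ici s₀ → t ≠ T := fun t ht => by
      have : T + 1 ≤ t := ht
      intro h; rw [h] at this; linarith
    have hmono : MonotoneOn (fun t => I t - t / C ^ 2) (Ici s₀) := by
      apply monotoneOn_of_deriv_nonneg (convex_Ici s₀)
      · intro t ht
        exact ((hI' t (hs₀ne t ht)).sub
          ((hasDerivAt_id t).div_const (C ^ 2))).differentiableAt.continuousAt.continuousWithinAt
      · intro t ht
        rw [interior_Ici] at ht
        exact ((hI' t (hs₀ne t (mem_Ici.mpr (le_of_lt ht)))).sub
          ((hasDerivAt_id t).div_const (C ^ 2))).differentiableAt.differentiableWithinAt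
      · intro t ht
        rw [interior_Ici] at ht
        have hid : HasDerivAt (fun x : ℝ => x / C ^ 2) (1 / C ^ 2) t := by
          simpa using (hasDerivAt_id t).div_const (C ^ 2)
        have hd := (hI' t (hs₀ne t (mem_Ici.mpr (le_of_lt ht)))).fun_sub hid
        rw [hd.deriv]
        have hz2 : z t ^ 2 ≤ C ^ 2 := by
          have h1 := hC t
          nlinarith [abs_nonneg (z t), sq_abs (z t)]
        have hz2pos : 0 < z t ^ 2 := by have h := hne t (hs₀ne t (mem_Ici.mpr (le_of_lt ht))); positivity
        have h2 := one_div_le_one_div_of_le hz2pos hz2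
        linarith
    set s : ℝ := s₀ + C ^ 2 * (|y 0 - I s₀| + 1) with hs_def
    have hdiff : s - s₀ = C ^ 2 * (|y 0 - I s₀| + 1) := by rw [hs_def]; ring
    have hss₀ : s₀ ≤ s := by
      nlinarith [abs_nonneg (y 0 - I s₀), hC2pos]
    have hsT : T < s := by
      have : T < s₀ := by rw [hs₀_def]; linarith
      linarith
    have hIs : y 0 < I s := by
      have hm := hmono (mem_Ici.mpr le_rfl) (mem_Ici.mpr hss₀) hss₀
      have hdd : (s - s₀) / C ^ 2 = |y 0 - I s₀| + 1 := by
        rw [hdiff]; field_simp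
      have h1 : I s₀ + (s - s₀) / C ^ 2 ≤ I s := by
        have expand : s / C ^ 2 - s₀ / C ^ 2 = (s - s₀) / C ^ 2 := by ring
        linarith [hm, expand]
      have h2 : y 0 - I s₀ ≤ |y 0 - I s₀| := le_abs_self _
      rw [hdd] at h1
      linarith
    have hw0 : y 0 - I s * z 0 < 0 := by rw [hz0]; linarith
    have hwT : 0 < y T - I s * z T := by
      rw [hyT, hzT, mul_zero, sub_zero]
      have : 1 / a < 0 := one_div_neg.mpr haneg
      linarith
    have hwc : Continuous fun t => y t - I s * z t := hyc.sub (continuous_const.mul hzc)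
    have hmem : (0 : ℝ) ∈ Icc ((fun t => y t - I s * z t) 0) ((fun t => y t - I s * z t) T) :=
      ⟨le_of_lt hw0, le_of_lt hwT⟩
    obtain ⟨r, hrIcc, hr0⟩ := intermediate_value_Icc (le_of_lt hT0) hwc.continuousOn hmem
    refine final s r ?_ (ne_of_gt hsT) hr0
    have : r < s := lt_of_le_of_lt hrIcc.2 hsT
    exact ne_of_lt this
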